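/- arXiv:2309.11030 — 7 statements merged into one kernel-verified Lean document; each statement's English description precedes it below -/
import Mathlib

section
/- Every maximal abelian Lie subalgebra of so(3,1) is 2-dimensional: if h is a Lie subalgebra of so(3,1) over ℝ such that h is abelian and every abelian Lie subalgebra h' of so(3,1) with h ≤ h' equals h, then the finrank over ℝ of h is 2. -/
open Matrix

/-- The matrix `J = diag(1,1,1,-1)` defining the Lorentz form of signature (3,1). -/
noncomputable def lorentzJ : Matrix (Fin 4) (Fin 4) ℝ :=
  Matrix.diagonal ![1, 1, 1, -1]

attribute [local instance 100] LieRing.ofAssociativeRing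

/-- The real Lie algebra `so(3,1)` of matrices `Y` with `Yᵀ ⬝ J = -J ⬝ Y`. -/
noncomputable def so31 : LieSubalgebra ℝ (Matrix (Fin 4) (Fin 4) ℝ) :=
  skewAdjointMatricesLieSubalgebra lorentzJ

/-- Element of so(3,1) with rotation part `a` and boost part `b`. -/
def Mab (a b : Fin 3 → ℝ) : Matrix (Fin 4) (Fin 4) ℝ :=
  !![0, -(a 2), a 1, b 0;
     a 2, 0, -(a 0), b 1;
     -(a 1), a 0, 0, b 2;
     b 0, b 1, b 2, 0]

lemma mem_so31_iff (A : Matrix (Fin 4) (Fin 4) ℝ) :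
    A ∈ so31 ↔ Aᵀ * lorentzJ = lorentzJ * (-A) := by
  rw [so31, mem_skewAdjointMatricesLieSubalgebra, mem_skewAdjointMatricesSubmodule]
  rfl

lemma Mab_mem (a b : Fin 3 → ℝ) : Mab a b ∈ so31 := by
  rw [mem_so31_iff]
  ext i j
  fin_cases i <;> fin_cases j <;>
    simp [Mab, lorentzJ, Matrix.mul_apply, Fin.sum_univ_four, Matrix.diagonal, Matrix.transpose_apply, Matrix.vecHead, Matrix.vecTail] <;> ring


lemma lorentzJ_eq : lorentzJ = !![1,0,0,0; 0,1,0,0; 0,0,1,0; 0,0,0,-1] := by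
  ext i j
  fin_cases i <;> fin_cases j <;> simp [lorentzJ, Matrix.diagonal, Matrix.vecHead, Matrix.vecTail]

/-- Every element of so(3,1) has the form `Mab a b`. -/
lemma so31_form {A : Matrix (Fin 4) (Fin 4) ℝ} (hA : A ∈ so31) :
    A = Mab ![A 2 1, A 0 2, A 1 0] ![A 0 3, A 1 3, A 2 3] := by
  rw [mem_so31_iff, lorentzJ_eq] at hA
  have e00 := congrFun (congrFun hA 0) 0
  have e01 := congrFun (congrFun hA 0) 1
  have e02 := congrFun (congrFun hA 0) 2
  have e03 := congrFun (congrFun hA 0) 3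
  have e10 := congrFun (congrFun hA 1) 0
  have e11 := congrFun (congrFun hA 1) 1
  have e12 := congrFun (congrFun hA 1) 2
  have e13 := congrFun (congrFun hA 1) 3
  have e20 := congrFun (congrFun hA 2) 0
  have e21 := congrFun (congrFun hA 2) 1
  have e22 := congrFun (congrFun hA 2) 2
  have e23 := congrFun (congrFun hA 2) 3
  have e30 := congrFun (congrFun hA 3) 0
  have e31 := congrFun (congrFun hA 3) 1
  have e32 := congrFun (congrFun hA 3) 2
  have e33 := congrFun (congrFun hA 3) 3
  simp [Matrix.mul_apply, Fin.sum_univ_four, Matrix.transpose_apply,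
    Matrix.neg_apply, Matrix.vecHead, Matrix.vecTail] at e00 e01 e02 e03 e10 e11 e12 e13 e20 e21 e22 e23 e30 e31 e32 e33
  -- norm_num at e00 e01 e02 e03 e10 e11 e12 e13 e20 e21 e22 e23 e30 e31 e32 e33
  ext i j
  fin_cases i <;> fin_cases j <;> simp [Mab] <;> linarith

/-- Cross product of two vectors in `ℝ³`. -/
def cr (a b : Fin 3 → ℝ) : Fin 3 → ℝ :=
  ![a 1 * b 2 - a 2 * b 1, a 2 * b 0 - a 0 * b 2, a 0 * b 1 - a 1 * b 0]

set_option maxHeartbeats 1600000 in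
lemma Mab_bracket (a b c d : Fin 3 → ℝ) :
    ⁅Mab a b, Mab c d⁆ = Mab (cr a c - cr b d) (cr a d + cr b c) := by
  rw [Ring.lie_def]
  ext i j
  fin_cases i <;> fin_cases j <;>
    simp [Mab, cr, Matrix.mul_apply, Fin.sum_univ_four, Matrix.vecHead, Matrix.vecTail] <;> ring

lemma Mab_zero : Mab 0 0 = 0 := by
  ext i j
  fin_cases i <;> fin_cases j <;> simp [Mab] <;> rfl

lemma Mab_eq_zero {a b : Fin 3 → ℝ} (h : Mab a b = 0) : a = 0 ∧ b = 0 := by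
  constructor <;> funext k <;> fin_cases k
  · simpa [Mab] using congrFun (congrFun h 2) 1
  · simpa [Mab] using congrFun (congrFun h 0) 2
  · simpa [Mab] using congrFun (congrFun h 1) 0
  · simpa [Mab] using congrFun (congrFun h 0) 3
  · simpa [Mab] using congrFun (congrFun h 1) 3
  · simpa [Mab] using congrFun (congrFun h 2) 3

lemma Mab_add (a b c d : Fin 3 → ℝ) : Mab a b + Mab c d = Mab (a + c) (b + d) := by
  ext i j
  fin_cases i <;> fin_cases j <;> simp [Mab] <;> ring

lemma Mab_smul (s : ℝ) (a b : Fin 3 → ℝ) : s • Mab a b = Mab (s • a) (s • b) := by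
  ext i j
  fin_cases i <;> fin_cases j <;> simp [Mab] <;> ring

lemma central {a b c d : Fin 3 → ℝ} (j : Fin 3) (hj : a j ≠ 0 ∨ b j ≠ 0)
    (h1 : cr a c - cr b d = 0) (h2 : cr a d + cr b c = 0) :
    ∃ s t : ℝ, c = s • a - t • b ∧ d = s • b + t • a := by
  have n : a j ^ 2 + b j ^ 2 ≠ 0 := by
    rcases hj with hh | hh <;> positivity
  have p0 : a 1 * c 2 - a 2 * c 1 - (b 1 * d 2 - b 2 * d 1) = 0 := by
    simpa [cr, Matrix.vecHead, Matrix.vecTail] using congrFun h1 0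
  have p1 : a 2 * c 0 - a 0 * c 2 - (b 2 * d 0 - b 0 * d 2) = 0 := by
    simpa [cr, Matrix.vecHead, Matrix.vecTail] using congrFun h1 1
  have p2 : a 0 * c 1 - a 1 * c 0 - (b 0 * d 1 - b 1 * d 0) = 0 := by
    simpa [cr, Matrix.vecHead, Matrix.vecTail] using congrFun h1 2
  have q0 : a 1 * d 2 - a 2 * d 1 + (b 1 * c 2 - b 2 * c 1) = 0 := by
    simpa [cr, Matrix.vecHead, Matrix.vecTail] using congrFun h2 0
  have q1 : a 2 * d 0 - a 0 * d 2 + (b 2 * c 0 - b 0 * c 2) = 0 := by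
    simpa [cr, Matrix.vecHead, Matrix.vecTail] using congrFun h2 1
  have q2 : a 0 * d 1 - a 1 * d 0 + (b 0 * c 1 - b 1 * c 0) = 0 := by
    simpa [cr, Matrix.vecHead, Matrix.vecTail] using congrFun h2 2
  have E1 : ∀ k, a j * c k - b j * d k = a k * c j - b k * d j := by
    intro k
    fin_cases j <;> fin_cases k <;>
      (try simp only [Fin.zero_eta, Fin.mk_one, Fin.reduceFinMk]) <;>
      first | ring1 | linear_combination p0 | linear_combination -p0 | linear_combination p1 | linear_combination -p1 | linear_combination p2 | linear_combination -p2
  have E2 : ∀ k, a j * d k + b j * c k = a k * d j + b k * c j := by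
    intro k
    fin_cases j <;> fin_cases k <;>
      (try simp only [Fin.zero_eta, Fin.mk_one, Fin.reduceFinMk]) <;>
      first | ring1 | linear_combination q0 | linear_combination -q0 | linear_combination q1 | linear_combination -q1 | linear_combination q2 | linear_combination -q2
  refine ⟨(c j * a j + d j * b j) / (a j ^ 2 + b j ^ 2),
    (d j * a j - c j * b j) / (a j ^ 2 + b j ^ 2), ?_, ?_⟩ <;> funext k
  · have e1 := E1 k
    have e2 := E2 k
    simp only [Pi.sub_apply, Pi.smul_apply, smul_eq_mul]
    field_simp
    linear_combination (a j * e1 + b j * e2)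
  · have e1 := E1 k
    have e2 := E2 k
    simp only [Pi.add_apply, Pi.smul_apply, smul_eq_mul]
    field_simp
    linear_combination (a j * e2 - b j * e1)

lemma span_pair_comm {L : Type*} [LieRing L] [LieAlgebra ℝ L] {u v x y : L} (huv : ⁅u, v⁆ = 0)
    (hx : x ∈ Submodule.span ℝ ({u, v} : Set L))
    (hy : y ∈ Submodule.span ℝ ({u, v} : Set L)) : ⁅x, y⁆ = 0 := by
  rw [Submodule.mem_span_pair] at hx hy
  obtain ⟨p, q, rfl⟩ := hx
  obtain ⟨r, s, rfl⟩ := hy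
  have hvu : ⁅v, u⁆ = 0 := by rw [← lie_skew, huv, neg_zero]
  simp [lie_add, add_lie, lie_smul, smul_lie, huv, hvu]

/-- The abelian Lie subalgebra spanned by two commuting elements. -/
noncomputable def pairAlg (u v : ↥so31) (huv : ⁅u, v⁆ = 0) : LieSubalgebra ℝ ↥so31 :=
  { Submodule.span ℝ ({u, v} : Set ↥so31) with
    lie_mem' := fun {x y} hx hy => by
      have : ⁅x, y⁆ = 0 := span_pair_comm huv hx hy
      rw [this]
      exact Submodule.zero_mem _ }

lemma pairAlg_mem_iff (u v : ↥so31) (huv : ⁅u, v⁆ = 0) (x : ↥so31) :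
    x ∈ pairAlg u v huv ↔ x ∈ Submodule.span ℝ ({u, v} : Set ↥so31) := Iff.rfl

lemma range_pair (u v : ↥so31) : Set.range ![u, v] = {u, v} := by
  ext x
  simp [Fin.exists_fin_two, eq_comm]
  tauto

lemma finrank_pairAlg (u v : ↥so31) (huv : ⁅u, v⁆ = 0)
    (hind : LinearIndependent ℝ ![u, v]) :
    Module.finrank ℝ (pairAlg u v huv) = 2 := by
  have : Module.finrank ℝ (Submodule.span ℝ (Set.range ![u, v])) = 2 := by
    rw [finrank_span_eq_card hind]
    simp
  rw [range_pair] at this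
  exact this

lemma bracket_uv (a b : Fin 3 → ℝ) : ⁅Mab a b, Mab (-b) a⁆ = 0 := by
  rw [Mab_bracket]
  have h1 : cr a (-b) - cr b a = 0 := by
    funext k
    fin_cases k <;> simp [cr, Matrix.vecHead, Matrix.vecTail] <;> ring
  have h2 : cr a a + cr b (-b) = 0 := by
    funext k
    fin_cases k <;> simp [cr, Matrix.vecHead, Matrix.vecTail] <;> ring
  rw [h1, h2, Mab_zero]

lemma indep_uv {a b : Fin 3 → ℝ} (j : Fin 3) (hj : a j ≠ 0 ∨ b j ≠ 0) :
    LinearIndependent ℝ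
      ![(⟨Mab a b, Mab_mem a b⟩ : ↥so31), (⟨Mab (-b) a, Mab_mem (-b) a⟩ : ↥so31)] := by
  rw [LinearIndependent.pair_iff]
  intro s t hst
  have hm : s • Mab a b + t • Mab (-b) a = 0 := by
    have := congrArg (fun z : ↥so31 => (z : Matrix (Fin 4) (Fin 4) ℝ)) hst
    simpa using this
  rw [Mab_smul, Mab_smul, Mab_add] at hm
  obtain ⟨h1, h2⟩ := Mab_eq_zero hm
  have e1 : s * a j - t * b j = 0 := by
    have := congrFun h1 j
    simp only [Pi.add_apply, Pi.smul_apply, Pi.neg_apply, smul_eq_mul, Pi.zero_apply] at this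
    linarith
  have e2 : s * b j + t * a j = 0 := by
    have := congrFun h2 j
    simp only [Pi.add_apply, Pi.smul_apply, smul_eq_mul, Pi.zero_apply] at this
    linarith
  have hn : a j ^ 2 + b j ^ 2 ≠ 0 := by rcases hj with hh | hh <;> positivity
  constructor
  · have hs : s * (a j ^ 2 + b j ^ 2) = 0 := by linear_combination a j * e1 + b j * e2
    rcases mul_eq_zero.mp hs with hh | hh
    · exact hh
    · exact absurd hh hn
  · have ht : t * (a j ^ 2 + b j ^ 2) = 0 := by linear_combination a j * e2 - b j * e1
    rcases mul_eq_zero.mp ht with hh | hh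
    · exact hh
    · exact absurd hh hn

lemma tail_lemma (h : LieSubalgebra ℝ ↥so31)
    (hmax : ∀ h' : LieSubalgebra ℝ ↥so31,
      (∀ X ∈ h', ∀ Y ∈ h', ⁅X, Y⁆ = 0) → h ≤ h' → h' = h)
    (a b : Fin 3 → ℝ) (j : Fin 3) (hj : a j ≠ 0 ∨ b j ≠ 0)
    (hle : ∀ X ∈ h, X ∈ Submodule.span ℝ
      (({⟨Mab a b, Mab_mem a b⟩, ⟨Mab (-b) a, Mab_mem (-b) a⟩} : Set ↥so31))) :
    Module.finrank ℝ h = 2 := by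
  set u : ↥so31 := ⟨Mab a b, Mab_mem a b⟩ with hu
  set v : ↥so31 := ⟨Mab (-b) a, Mab_mem (-b) a⟩ with hv
  have huv : ⁅u, v⁆ = 0 := by
    apply Subtype.ext
    rw [LieSubalgebra.coe_bracket]
    exact bracket_uv a b
  have heq : pairAlg u v huv = h :=
    hmax _ (fun X hX Y hY => span_pair_comm huv hX hY) (fun x hx => hle x hx)
  rw [← heq]
  exact finrank_pairAlg u v huv (indep_uv j hj)

/-- Every maximal abelian Lie subalgebra of `so(3,1)` is 2-dimensional. -/
theorem stmt1 (h : LieSubalgebra ℝ so31)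
    (habelian : ∀ X ∈ h, ∀ Y ∈ h, ⁅X, Y⁆ = 0)
    (hmax : ∀ h' : LieSubalgebra ℝ so31,
      (∀ X ∈ h', ∀ Y ∈ h', ⁅X, Y⁆ = 0) → h ≤ h' → h' = h) :
    Module.finrank ℝ h = 2 := by
  by_cases hbot : ∃ X ∈ h, X ≠ (0 : ↥so31)
  · obtain ⟨X, hX, hX0⟩ := hbot
    set a : Fin 3 → ℝ := ![X.val 2 1, X.val 0 2, X.val 1 0] with ha
    set b : Fin 3 → ℝ := ![X.val 0 3, X.val 1 3, X.val 2 3] with hb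
    have hform : X.val = Mab a b := so31_form X.2
    have hj : ∃ j, a j ≠ 0 ∨ b j ≠ 0 := by
      by_contra hc
      push_neg at hc
      have ha0 : a = 0 := funext fun k => (hc k).1
      have hb0 : b = 0 := funext fun k => (hc k).2
      apply hX0
      apply Subtype.ext
      rw [hform, ha0, hb0, Mab_zero]
      rfl
    obtain ⟨j, hj⟩ := hj
    apply tail_lemma h hmax a b j hj
    intro Y hY
    set c : Fin 3 → ℝ := ![Y.val 2 1, Y.val 0 2, Y.val 1 0] with hcc
    set d : Fin 3 → ℝ := ![Y.val 0 3, Y.val 1 3, Y.val 2 3] with hdd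
    have hformY : Y.val = Mab c d := so31_form Y.2
    have hcomm : ⁅X.val, Y.val⁆ = 0 := by
      rw [← LieSubalgebra.coe_bracket, habelian X hX Y hY]
      rfl
    rw [hform, hformY, Mab_bracket] at hcomm
    obtain ⟨g1, g2⟩ := Mab_eq_zero hcomm
    obtain ⟨s, t, hc1, hd1⟩ := central j hj g1 g2
    rw [Submodule.mem_span_pair]
    refine ⟨s, t, Subtype.ext ?_⟩
    have : (s • (⟨Mab a b, Mab_mem a b⟩ : ↥so31) + t • ⟨Mab (-b) a, Mab_mem (-b) a⟩).val
        = s • Mab a b + t • Mab (-b) a := rfl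
    rw [this, Mab_smul, Mab_smul, Mab_add, hformY, hc1, hd1]
    congr 1
    funext k
    simp
    ring
  · push_neg at hbot
    apply tail_lemma h hmax ![1, 0, 0] 0 0
    · left
      norm_num
    · intro Y hY
      rw [hbot Y hY]
      exact Submodule.zero_mem _
end

section
/- The polynomials C₁ = x₃² − x₄² + x₁x₅ + x₂x₆ and C₂ = 2x₃x₄ + x₂x₅ − x₁x₆ are Casimir invariants of 𝔠(2): for every polynomial p ∈ ℝ[x₁,…,x₆] one has {C₁, p} = 0 and {C₂, p} = 0 for the Lie–Poisson bracket of 𝔠(2). -/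
open MvPolynomial

/-- Structure-constant polynomials `c j k = {x_{j+1}, x_{k+1}}` of the 2D conformal
algebra `𝔠(2)` (indices `0,…,5` correspond to `x₁,…,x₆`). -/
noncomputable def c2Mat : Matrix (Fin 6) (Fin 6) (MvPolynomial (Fin 6) ℝ) :=
  !![0,            0,            -X 1, X 0,  2 * X 3,      2 * X 2;
     0,            0,            X 0,  X 1,  -(2 * X 2),   2 * X 3;
     X 1,          -X 0,         0,    0,    X 5,          -X 4;
     -X 0,         -X 1,         0,    0,    X 4,          X 5;
     -(2 * X 3),   2 * X 2,      -X 5, -X 4, 0,            0;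
     -(2 * X 2),   -(2 * X 3),   X 4,  -X 5, 0,            0]

/-- The Lie–Poisson bracket of `𝔠(2)` on `ℝ[x₁,…,x₆]`:
`{p,q} = ∑_{j,k} c_{jk} (∂p/∂x_j) (∂q/∂x_k)`. -/
noncomputable def pb (p q : MvPolynomial (Fin 6) ℝ) : MvPolynomial (Fin 6) ℝ :=
  ∑ j : Fin 6, ∑ k : Fin 6, c2Mat j k * pderiv j p * pderiv k q

private lemma cons_val_five {α : Type*} {m : ℕ} (x : α)
    (u : Fin m.succ.succ.succ.succ.succ → α) :
    Matrix.vecCons x u 5 = Matrix.vecHead (Matrix.vecTail (Matrix.vecTail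
      (Matrix.vecTail (Matrix.vecTail u)))) :=
  rfl

private lemma pd_two (j : Fin 6) : pderiv j (2 : MvPolynomial (Fin 6) ℝ) = 0 := by
  rw [show (2:MvPolynomial (Fin 6) ℝ) = 1 + 1 by norm_num]
  simp

/-- `C₁ = x₃² − x₄² + x₁x₅ + x₂x₆` and `C₂ = 2x₃x₄ + x₂x₅ − x₁x₆` are Casimir
invariants of `𝔠(2)`. -/
theorem stmt3 (p : MvPolynomial (Fin 6) ℝ) :
    pb (X 2 ^ 2 - X 3 ^ 2 + X 0 * X 4 + X 1 * X 5) p = 0 ∧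
    pb (2 * X 2 * X 3 + X 1 * X 4 - X 0 * X 5) p = 0 := by
  constructor <;>
  · rw [pb, Finset.sum_comm]
    refine Finset.sum_eq_zero fun k _ => ?_
    rw [← Finset.sum_mul]
    convert zero_mul _
    fin_cases k <;>
    · simp [c2Mat, Fin.sum_univ_six, pderiv_X, Pi.single_apply, cons_val_five, pd_two,
        Matrix.vecHead, Matrix.vecTail]
      ring
end

section
/- The Poisson commutant of the maximal Abelian subalgebra a₍₁₂₎ = span{x₁,x₂} of 𝔠(2) is Abelian: if p, q ∈ ℝ[x₁,…,x₆] satisfy {p,x₁} = {p,x₂} = 0 and {q,x₁} = {q,x₂} = 0, then {p,q} = 0. -/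
open MvPolynomial

/-- The Poisson commutant of `a₍₁₂₎ = span{x₁,x₂}` is Abelian. -/
theorem stmt4 (p q : MvPolynomial (Fin 6) ℝ)
    (hp1 : pb p (X 0) = 0) (hp2 : pb p (X 1) = 0)
    (hq1 : pb q (X 0) = 0) (hq2 : pb q (X 1) = 0) :
    pb p q = 0 := by
  simp only [pb, Fin.sum_univ_six,
    show c2Mat 0 0 = 0 from rfl,
    show c2Mat 0 1 = 0 from rfl,
    show c2Mat 0 2 = -X 1 from rfl,
    show c2Mat 0 3 = X 0 from rfl,
    show c2Mat 0 4 = 2 * X 3 from rfl,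
    show c2Mat 0 5 = 2 * X 2 from rfl,
    show c2Mat 1 0 = 0 from rfl,
    show c2Mat 1 1 = 0 from rfl,
    show c2Mat 1 2 = X 0 from rfl,
    show c2Mat 1 3 = X 1 from rfl,
    show c2Mat 1 4 = -(2 * X 2) from rfl,
    show c2Mat 1 5 = 2 * X 3 from rfl,
    show c2Mat 2 0 = X 1 from rfl,
    show c2Mat 2 1 = -X 0 from rfl,
    show c2Mat 2 2 = 0 from rfl,
    show c2Mat 2 3 = 0 from rfl,
    show c2Mat 2 4 = X 5 from rfl,
    show c2Mat 2 5 = -X 4 from rfl,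
    show c2Mat 3 0 = -X 0 from rfl,
    show c2Mat 3 1 = -X 1 from rfl,
    show c2Mat 3 2 = 0 from rfl,
    show c2Mat 3 3 = 0 from rfl,
    show c2Mat 3 4 = X 4 from rfl,
    show c2Mat 3 5 = X 5 from rfl,
    show c2Mat 4 0 = -(2 * X 3) from rfl,
    show c2Mat 4 1 = 2 * X 2 from rfl,
    show c2Mat 4 2 = -X 5 from rfl,
    show c2Mat 4 3 = -X 4 from rfl,
    show c2Mat 4 4 = 0 from rfl,
    show c2Mat 4 5 = 0 from rfl,
    show c2Mat 5 0 = -(2 * X 2) from rfl,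
    show c2Mat 5 1 = -(2 * X 3) from rfl,
    show c2Mat 5 2 = X 4 from rfl,
    show c2Mat 5 3 = -X 5 from rfl,
    show c2Mat 5 4 = 0 from rfl,
    show c2Mat 5 5 = 0 from rfl,
    pderiv_X_self, pderiv_X_of_ne (by decide : (0 : Fin 6) ≠ 1),
    pderiv_X_of_ne (by decide : (0 : Fin 6) ≠ 2),
    pderiv_X_of_ne (by decide : (0 : Fin 6) ≠ 3),
    pderiv_X_of_ne (by decide : (0 : Fin 6) ≠ 4),
    pderiv_X_of_ne (by decide : (0 : Fin 6) ≠ 5),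
    pderiv_X_of_ne (by decide : (1 : Fin 6) ≠ 0),
    pderiv_X_of_ne (by decide : (1 : Fin 6) ≠ 2),
    pderiv_X_of_ne (by decide : (1 : Fin 6) ≠ 3),
    pderiv_X_of_ne (by decide : (1 : Fin 6) ≠ 4),
    pderiv_X_of_ne (by decide : (1 : Fin 6) ≠ 5),
    mul_zero, zero_mul, mul_one, add_zero, zero_add] at hp1 hp2 hq1 hq2
  have hne : (X 0 ^ 2 + X 1 ^ 2 : MvPolynomial (Fin 6) ℝ) ≠ 0 := by
    intro h
    have h2 := congrArg (eval fun _ => (1 : ℝ)) h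
    simp at h2
  have key : (X 0 ^ 2 + X 1 ^ 2 : MvPolynomial (Fin 6) ℝ) * pb p q = 0 := by
    simp only [pb, Fin.sum_univ_six,
      show c2Mat 0 0 = 0 from rfl,
    show c2Mat 0 1 = 0 from rfl,
    show c2Mat 0 2 = -X 1 from rfl,
    show c2Mat 0 3 = X 0 from rfl,
    show c2Mat 0 4 = 2 * X 3 from rfl,
    show c2Mat 0 5 = 2 * X 2 from rfl,
    show c2Mat 1 0 = 0 from rfl,
    show c2Mat 1 1 = 0 from rfl,
    show c2Mat 1 2 = X 0 from rfl,
    show c2Mat 1 3 = X 1 from rfl,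
    show c2Mat 1 4 = -(2 * X 2) from rfl,
    show c2Mat 1 5 = 2 * X 3 from rfl,
    show c2Mat 2 0 = X 1 from rfl,
    show c2Mat 2 1 = -X 0 from rfl,
    show c2Mat 2 2 = 0 from rfl,
    show c2Mat 2 3 = 0 from rfl,
    show c2Mat 2 4 = X 5 from rfl,
    show c2Mat 2 5 = -X 4 from rfl,
    show c2Mat 3 0 = -X 0 from rfl,
    show c2Mat 3 1 = -X 1 from rfl,
    show c2Mat 3 2 = 0 from rfl,
    show c2Mat 3 3 = 0 from rfl,
    show c2Mat 3 4 = X 4 from rfl,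
    show c2Mat 3 5 = X 5 from rfl,
    show c2Mat 4 0 = -(2 * X 3) from rfl,
    show c2Mat 4 1 = 2 * X 2 from rfl,
    show c2Mat 4 2 = -X 5 from rfl,
    show c2Mat 4 3 = -X 4 from rfl,
    show c2Mat 4 4 = 0 from rfl,
    show c2Mat 4 5 = 0 from rfl,
    show c2Mat 5 0 = -(2 * X 2) from rfl,
    show c2Mat 5 1 = -(2 * X 3) from rfl,
    show c2Mat 5 2 = X 4 from rfl,
    show c2Mat 5 3 = -X 5 from rfl,
    show c2Mat 5 4 = 0 from rfl,
    show c2Mat 5 5 = 0 from rfl]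
    linear_combination
      ((X 0 ^ 2 + X 1 ^ 2) * pderiv 0 q
        - ((X 0 * X 4 - X 1 * X 5) * pderiv 4 q + (X 1 * X 4 + X 0 * X 5) * pderiv 5 q)) * hp1
      + ((X 0 ^ 2 + X 1 ^ 2) * pderiv 1 q
        - ((X 0 * X 5 + X 1 * X 4) * pderiv 4 q + (X 1 * X 5 - X 0 * X 4) * pderiv 5 q)) * hp2
      + (-(X 0 ^ 2 + X 1 ^ 2) * pderiv 0 p
        + ((X 0 * X 4 - X 1 * X 5) * pderiv 4 p + (X 1 * X 4 + X 0 * X 5) * pderiv 5 p)) * hq1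
      + (-(X 0 ^ 2 + X 1 ^ 2) * pderiv 1 p
        + ((X 0 * X 5 + X 1 * X 4) * pderiv 4 p + (X 1 * X 5 - X 0 * X 4) * pderiv 5 p)) * hq2
  rcases mul_eq_zero.mp key with h | h
  · exact absurd h hne
  · exact h
end

section
/- The Poisson commutant of the maximal Abelian subalgebra a₍₅₆₎ = span{x₅,x₆} of 𝔠(2) is Abelian: if p, q ∈ ℝ[x₁,…,x₆] satisfy {p,x₅} = {p,x₆} = 0 and {q,x₅} = {q,x₆} = 0, then {p,q} = 0. -/
open MvPolynomial

private lemma cv5 {α : Type*} (a : α) (s : Fin 5 → α) : Matrix.vecCons a s 5 = s 4 := rfl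
private lemma cv4 {α : Type*} (a : α) (s : Fin 4 → α) : Matrix.vecCons a s 4 = s 3 := rfl
private lemma cv3 {α : Type*} (a : α) (s : Fin 3 → α) : Matrix.vecCons a s 3 = s 2 := rfl
private lemma cv2 {α : Type*} (a : α) (s : Fin 2 → α) : Matrix.vecCons a s 2 = s 1 := rfl
private lemma cv1 {α : Type*} (a : α) (s : Fin 1 → α) : Matrix.vecCons a s 1 = s 0 := rfl
private lemma cv0 {α : Type*} {n : ℕ} (a : α) (s : Fin (n+1) → α) : Matrix.vecCons a s 0 = a := rfl

set_option maxHeartbeats 2000000 in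
private lemma pb_X4 (p : MvPolynomial (Fin 6) ℝ) :
    pb p (X 4) = 2 * X 3 * pderiv 0 p - 2 * X 2 * pderiv 1 p
      + X 5 * pderiv 2 p + X 4 * pderiv 3 p := by
  simp only [pb, c2Mat, Fin.sum_univ_six,
    Matrix.cons_val', Matrix.cons_val_zero, Matrix.cons_val_one, Matrix.head_cons,
    Matrix.empty_val', Matrix.cons_val_fin_one, Matrix.head_fin_const,
    Matrix.cons_val_two, Matrix.cons_val_three, Matrix.cons_val_four, Matrix.tail_cons,
    Matrix.of_apply, cv0, cv1, cv2, cv3, cv4, cv5, pderiv_X_self,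
    pderiv_X_of_ne (show (4:Fin 6) ≠ 0 by decide), pderiv_X_of_ne (show (4:Fin 6) ≠ 1 by decide),
    pderiv_X_of_ne (show (4:Fin 6) ≠ 2 by decide), pderiv_X_of_ne (show (4:Fin 6) ≠ 3 by decide),
    pderiv_X_of_ne (show (4:Fin 6) ≠ 5 by decide)]
  ring

set_option maxHeartbeats 2000000 in
private lemma pb_X5 (p : MvPolynomial (Fin 6) ℝ) :
    pb p (X 5) = 2 * X 2 * pderiv 0 p + 2 * X 3 * pderiv 1 p
      - X 4 * pderiv 2 p + X 5 * pderiv 3 p := by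
  simp only [pb, c2Mat, Fin.sum_univ_six,
    Matrix.cons_val', Matrix.cons_val_zero, Matrix.cons_val_one, Matrix.head_cons,
    Matrix.empty_val', Matrix.cons_val_fin_one, Matrix.head_fin_const,
    Matrix.cons_val_two, Matrix.cons_val_three, Matrix.cons_val_four, Matrix.tail_cons,
    Matrix.of_apply, cv0, cv1, cv2, cv3, cv4, cv5, pderiv_X_self,
    pderiv_X_of_ne (show (5:Fin 6) ≠ 0 by decide), pderiv_X_of_ne (show (5:Fin 6) ≠ 1 by decide),
    pderiv_X_of_ne (show (5:Fin 6) ≠ 2 by decide), pderiv_X_of_ne (show (5:Fin 6) ≠ 3 by decide),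
    pderiv_X_of_ne (show (5:Fin 6) ≠ 4 by decide)]
  ring

set_option maxHeartbeats 2000000 in
private lemma key_identity (p q : MvPolynomial (Fin 6) ℝ) :
    ((X 4 : MvPolynomial (Fin 6) ℝ)^2 + (X 5)^2) * pb p q =
      (((X 4)^2 + (X 5)^2) * pderiv 4 q + (X 1 * X 5 - X 0 * X 4) * pderiv 0 q
        - (X 0 * X 5 + X 1 * X 4) * pderiv 1 q) * pb p (X 4)
    + (((X 4)^2 + (X 5)^2) * pderiv 5 q - (X 1 * X 4 + X 0 * X 5) * pderiv 0 q
        + (X 0 * X 4 - X 1 * X 5) * pderiv 1 q) * pb p (X 5)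
    + (-(((X 4)^2 + (X 5)^2) * pderiv 4 p) - (X 1 * X 5 - X 0 * X 4) * pderiv 0 p
        + (X 0 * X 5 + X 1 * X 4) * pderiv 1 p) * pb q (X 4)
    + (-(((X 4)^2 + (X 5)^2) * pderiv 5 p) + (X 1 * X 4 + X 0 * X 5) * pderiv 0 p
        + (X 1 * X 5 - X 0 * X 4) * pderiv 1 p) * pb q (X 5) := by
  rw [pb_X4, pb_X5, pb_X4, pb_X5]
  simp only [pb, c2Mat, Fin.sum_univ_six,
    Matrix.cons_val', Matrix.cons_val_zero, Matrix.cons_val_one, Matrix.head_cons,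
    Matrix.empty_val', Matrix.cons_val_fin_one, Matrix.head_fin_const,
    Matrix.cons_val_two, Matrix.cons_val_three, Matrix.cons_val_four, Matrix.tail_cons,
    Matrix.of_apply, cv0, cv1, cv2, cv3, cv4, cv5]
  ring

/-- The Poisson commutant of `a₍₅₆₎ = span{x₅,x₆}` is Abelian. -/
theorem stmt6 (p q : MvPolynomial (Fin 6) ℝ)
    (hp1 : pb p (X 4) = 0) (hp2 : pb p (X 5) = 0)
    (hq1 : pb q (X 4) = 0) (hq2 : pb q (X 5) = 0) :
    pb p q = 0 := by
  have key := key_identity p q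
  rw [hp1, hp2, hq1, hq2] at key
  simp only [mul_zero, add_zero, zero_add] at key
  have hne : ((X 4 : MvPolynomial (Fin 6) ℝ)^2 + (X 5)^2) ≠ 0 := by
    intro h
    have h2 := congrArg (eval (fun _ => (1:ℝ))) h
    simp at h2
  exact (mul_eq_zero.1 key).resolve_left hne
end

section
/- The Poisson commutant of the Borel subalgebra 𝔟 = span{x₃,x₄,x₅,x₆} of 𝔠(2) is Abelian: if p, q ∈ ℝ[x₁,…,x₆] satisfy {p,x₃} = {p,x₄} = {p,x₅} = {p,x₆} = 0 and {q,x₃} = {q,x₄} = {q,x₅} = {q,x₆} = 0, then {p,q} = 0. -/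
open MvPolynomial

lemma c2Mat_0_0 : c2Mat 0 0 = 0 := rfl
lemma c2Mat_0_1 : c2Mat 0 1 = 0 := rfl
lemma c2Mat_0_2 : c2Mat 0 2 = -X 1 := rfl
lemma c2Mat_0_3 : c2Mat 0 3 = X 0 := rfl
lemma c2Mat_0_4 : c2Mat 0 4 = 2 * X 3 := rfl
lemma c2Mat_0_5 : c2Mat 0 5 = 2 * X 2 := rfl
lemma c2Mat_1_0 : c2Mat 1 0 = 0 := rfl
lemma c2Mat_1_1 : c2Mat 1 1 = 0 := rfl
lemma c2Mat_1_2 : c2Mat 1 2 = X 0 := rfl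
lemma c2Mat_1_3 : c2Mat 1 3 = X 1 := rfl
lemma c2Mat_1_4 : c2Mat 1 4 = -(2 * X 2) := rfl
lemma c2Mat_1_5 : c2Mat 1 5 = 2 * X 3 := rfl
lemma c2Mat_2_0 : c2Mat 2 0 = X 1 := rfl
lemma c2Mat_2_1 : c2Mat 2 1 = -X 0 := rfl
lemma c2Mat_2_2 : c2Mat 2 2 = 0 := rfl
lemma c2Mat_2_3 : c2Mat 2 3 = 0 := rfl
lemma c2Mat_2_4 : c2Mat 2 4 = X 5 := rfl
lemma c2Mat_2_5 : c2Mat 2 5 = -X 4 := rfl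
lemma c2Mat_3_0 : c2Mat 3 0 = -X 0 := rfl
lemma c2Mat_3_1 : c2Mat 3 1 = -X 1 := rfl
lemma c2Mat_3_2 : c2Mat 3 2 = 0 := rfl
lemma c2Mat_3_3 : c2Mat 3 3 = 0 := rfl
lemma c2Mat_3_4 : c2Mat 3 4 = X 4 := rfl
lemma c2Mat_3_5 : c2Mat 3 5 = X 5 := rfl
lemma c2Mat_4_0 : c2Mat 4 0 = -(2 * X 3) := rfl
lemma c2Mat_4_1 : c2Mat 4 1 = 2 * X 2 := rfl
lemma c2Mat_4_2 : c2Mat 4 2 = -X 5 := rfl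
lemma c2Mat_4_3 : c2Mat 4 3 = -X 4 := rfl
lemma c2Mat_4_4 : c2Mat 4 4 = 0 := rfl
lemma c2Mat_4_5 : c2Mat 4 5 = 0 := rfl
lemma c2Mat_5_0 : c2Mat 5 0 = -(2 * X 2) := rfl
lemma c2Mat_5_1 : c2Mat 5 1 = -(2 * X 3) := rfl
lemma c2Mat_5_2 : c2Mat 5 2 = X 4 := rfl
lemma c2Mat_5_3 : c2Mat 5 3 = -X 5 := rfl
lemma c2Mat_5_4 : c2Mat 5 4 = 0 := rfl
lemma c2Mat_5_5 : c2Mat 5 5 = 0 := rfl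

set_option maxHeartbeats 1000000 in
theorem c2_ne : (X 0 ^ 2 + X 1 ^ 2 : MvPolynomial (Fin 6) ℝ) ≠ 0 := by
  intro h
  have h2 := congrArg (eval fun _ => (1 : ℝ)) h
  norm_num at h2

set_option maxHeartbeats 1000000 in
/-- The Poisson commutant of the Borel subalgebra `𝔟 = span{x₃,x₄,x₅,x₆}` is Abelian. -/
theorem stmt7 (p q : MvPolynomial (Fin 6) ℝ)
    (hp3 : pb p (X 2) = 0) (hp4 : pb p (X 3) = 0)
    (hp5 : pb p (X 4) = 0) (hp6 : pb p (X 5) = 0)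
    (hq3 : pb q (X 2) = 0) (hq4 : pb q (X 3) = 0)
    (hq5 : pb q (X 4) = 0) (hq6 : pb q (X 5) = 0) :
    pb p q = 0 := by
  have key : (X 0 ^ 2 + X 1 ^ 2 : MvPolynomial (Fin 6) ℝ) * pb p q = 0 := by
    simp only [pb, Fin.sum_univ_six, pderiv_X, Pi.single_apply, c2Mat_0_0, c2Mat_0_1, c2Mat_0_2, c2Mat_0_3, c2Mat_0_4, c2Mat_0_5, c2Mat_1_0, c2Mat_1_1, c2Mat_1_2, c2Mat_1_3, c2Mat_1_4, c2Mat_1_5, c2Mat_2_0, c2Mat_2_1, c2Mat_2_2, c2Mat_2_3, c2Mat_2_4, c2Mat_2_5, c2Mat_3_0, c2Mat_3_1, c2Mat_3_2, c2Mat_3_3, c2Mat_3_4, c2Mat_3_5, c2Mat_4_0, c2Mat_4_1, c2Mat_4_2, c2Mat_4_3, c2Mat_4_4, c2Mat_4_5, c2Mat_5_0, c2Mat_5_1, c2Mat_5_2, c2Mat_5_3, c2Mat_5_4, c2Mat_5_5,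
      Fin.reduceEq, if_true, if_false, reduceIte, mul_one, mul_zero, zero_mul, add_zero,
      zero_add] at hp3 hp4 hq3 hq4 ⊢
    linear_combination
      (X 0 * (X 0 * pderiv 2 q + X 1 * pderiv 3 q - 2 * X 2 * pderiv 4 q + 2 * X 3 * pderiv 5 q)
        - X 1 * (-(X 1 * pderiv 2 q) + X 0 * pderiv 3 q + 2 * X 3 * pderiv 4 q
          + 2 * X 2 * pderiv 5 q)) * hp3
      + (X 0 * (-(X 1 * pderiv 2 q) + X 0 * pderiv 3 q + 2 * X 3 * pderiv 4 q
          + 2 * X 2 * pderiv 5 q)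
        + X 1 * (X 0 * pderiv 2 q + X 1 * pderiv 3 q - 2 * X 2 * pderiv 4 q
          + 2 * X 3 * pderiv 5 q)) * hp4
      + ((2 * X 1 * X 3 + 2 * X 0 * X 2) * pderiv 4 p
        + (2 * X 1 * X 2 - 2 * X 0 * X 3) * pderiv 5 p
        - (X 0 ^ 2 + X 1 ^ 2) * pderiv 2 p) * hq3
      + ((2 * X 1 * X 2 - 2 * X 0 * X 3) * pderiv 4 p
        - (2 * X 0 * X 2 + 2 * X 1 * X 3) * pderiv 5 p
        - (X 0 ^ 2 + X 1 ^ 2) * pderiv 3 p) * hq4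
  rcases mul_eq_zero.mp key with h | h
  · exact absurd h c2_ne
  · exact h
end

section
/- The quadratic Poisson algebra Q₃(2) from the subalgebra a₃ = span{x₃}: set A₁ = x₃, A₂ = x₄, A₃ = x₁² + x₂², A₄ = x₁x₅ + x₂x₆, A₅ = x₁x₆ − x₂x₅, A₆ = x₅² + x₆². Then {Aⱼ, x₃} = 0 for all 1 ≤ j ≤ 6; {A₁, Aⱼ} = 0 for all j; and {A₂, A₃} = −2A₃, {A₂, A₄} = 0, {A₂, A₅} = 0, {A₂, A₆} = 2A₆, {A₃, A₄} = 4A₂A₃, {A₃, A₅} = 4A₁A₃, {A₃, A₆} = 8(A₂A₄ + A₁A₅), {A₄, A₅} = 0, {A₄, A₆} = 4A₂A₆, {A₅, A₆} = 4A₁A₆. -/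
open MvPolynomial

/-- Generators of the quadratic Poisson algebra `Q₃(2)`:
`A₁ = x₃, A₂ = x₄, A₃ = x₁² + x₂², A₄ = x₁x₅ + x₂x₆,
A₅ = x₁x₆ − x₂x₅, A₆ = x₅² + x₆²`. -/
noncomputable def A3 : Fin 6 → MvPolynomial (Fin 6) ℝ :=
  ![X 2,
    X 3,
    X 0 ^ 2 + X 1 ^ 2,
    X 0 * X 4 + X 1 * X 5,
    X 0 * X 5 - X 1 * X 4,
    X 4 ^ 2 + X 5 ^ 2]

lemma vecHead_tail_zero {α} [Zero α] {n : ℕ} :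
    Matrix.vecHead (Matrix.vecTail fun _ : Fin (n+2) => (0:α)) = 0 := rfl

lemma cons_val_five' {α} (a : α) (u : Fin 5 → α) : Matrix.vecCons a u 5 = u 4 := rfl

set_option maxHeartbeats 2000000 in
/-- The quadratic Poisson algebra `Q₃(2)` from the subalgebra `a₃ = span{x₃}`. -/
theorem stmt11 :
    (∀ j : Fin 6, pb (A3 j) (X 2) = 0) ∧
    (∀ j : Fin 6, pb (A3 0) (A3 j) = 0) ∧
    pb (A3 1) (A3 2) = -2 * A3 2 ∧
    pb (A3 1) (A3 3) = 0 ∧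
    pb (A3 1) (A3 4) = 0 ∧
    pb (A3 1) (A3 5) = 2 * A3 5 ∧
    pb (A3 2) (A3 3) = 4 * A3 1 * A3 2 ∧
    pb (A3 2) (A3 4) = 4 * A3 0 * A3 2 ∧
    pb (A3 2) (A3 5) = 8 * (A3 1 * A3 3 + A3 0 * A3 4) ∧
    pb (A3 3) (A3 4) = 0 ∧
    pb (A3 3) (A3 5) = 4 * A3 1 * A3 5 ∧
    pb (A3 4) (A3 5) = 4 * A3 0 * A3 5 := by
  refine ⟨fun j => ?_, fun j => ?_, ?_, ?_, ?_, ?_, ?_, ?_, ?_, ?_, ?_, ?_⟩ <;>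
    [fin_cases j; fin_cases j; skip; skip; skip; skip; skip; skip; skip; skip; skip; skip] <;>
    simp [pb, c2Mat, A3, Fin.sum_univ_six, pderiv_X, Pi.single_apply, pderiv_mul,
      pderiv_pow, cons_val_five', vecHead_tail_zero] <;>
    (try simp [Matrix.vecHead, Matrix.vecTail]) <;> ring
end

section
/- Casimir functions of the quadratic Poisson algebra Q_{e(2)}(2): with A₁ = x₁, A₂ = x₂, A₃ = x₃, A₄ = x₁x₅ + x₂x₆ − x₄², A₅ = x₁x₆ − x₂x₅ − 2x₃x₄, each of the three polynomials K₁ = A₅, K₂ = A₃² + A₄, K₃ = A₁² + A₂² satisfies {Kᵢ, Aⱼ} = 0 for every 1 ≤ j ≤ 5. -/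
open MvPolynomial

/-- Generators of the quadratic Poisson algebra `Q_{e(2)}(2)`. -/
noncomputable def Ae : Fin 5 → MvPolynomial (Fin 6) ℝ :=
  ![X 0,
    X 1,
    X 2,
    X 0 * X 4 + X 1 * X 5 - X 3 ^ 2,
    X 0 * X 5 - X 1 * X 4 - 2 * X 2 * X 3]

section AuxVec
variable {α : Type*}
@[simp] lemma cv6_5 (a : α) (s : Fin 5 → α) : Matrix.vecCons a s 5 = s 4 := rfl
@[simp] lemma cv6_4 (a : α) (s : Fin 5 → α) : Matrix.vecCons a s 4 = s 3 := rfl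
@[simp] lemma cv5_4 (a : α) (s : Fin 4 → α) : Matrix.vecCons a s 4 = s 3 := rfl
@[simp] lemma cv5_3 (a : α) (s : Fin 4 → α) : Matrix.vecCons a s 3 = s 2 := rfl
@[simp] lemma cv4_3 (a : α) (s : Fin 3 → α) : Matrix.vecCons a s 3 = s 2 := rfl
@[simp] lemma cv4_2 (a : α) (s : Fin 3 → α) : Matrix.vecCons a s 2 = s 1 := rfl
@[simp] lemma cv3_2 (a : α) (s : Fin 2 → α) : Matrix.vecCons a s 2 = s 1 := rfl
end AuxVec

@[simp] lemma pd2 (i : Fin 6) : pderiv i (2 : MvPolynomial (Fin 6) ℝ) = 0 := by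
  rw [show (2 : MvPolynomial (Fin 6) ℝ) = C 2 from (map_ofNat C 2).symm, pderiv_C]

set_option maxHeartbeats 2000000 in
/-- Casimir functions of the quadratic Poisson algebra `Q_{e(2)}(2)`. -/
theorem stmt18 :
    (∀ j : Fin 5, pb (Ae 4) (Ae j) = 0) ∧
    (∀ j : Fin 5, pb (Ae 2 ^ 2 + Ae 3) (Ae j) = 0) ∧
    (∀ j : Fin 5, pb (Ae 0 ^ 2 + Ae 1 ^ 2) (Ae j) = 0) := by
  refine ⟨fun j => ?_, fun j => ?_, fun j => ?_⟩ <;> fin_cases j <;>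
    simp [pb, c2Mat, Ae, Fin.sum_univ_six, pderiv_X, pderiv_mul, pderiv_pow,
      Matrix.vecHead, Matrix.vecTail] <;>
    ring
end
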